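/- Let λ be a partition, δ ∈ ℤ, and X_λ = {λᵀₗ - l + 1 - δ/2 : l ≥ 1}. Suppose the partition μ is defined by X_μ = (X_λ \ {x_M}) ∪ {-x_M} for some index M with x_M = λᵀ_M - M + 1 - δ/2 and -x_M ∉ X_λ. Then |μ| = |λ| - 2·x_M if x_M > 0, and |μ| = |λ| + 2·|x_M| if x_M < 0. -/

import Mathlib

/-- A partition: a weakly decreasing sequence of naturals (indexed from 0, so
`parts 0 = λ₁`) with finitely many nonzero terms. -/
structure PartitionSeq where
  parts : ℕ → ℕ
  antitone : ∀ ⦃i j : ℕ⦄, i ≤ j → parts j ≤ parts i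
  eventually_zero : ∃ N, ∀ i, N ≤ i → parts i = 0

/-- The `l`-th entry (for `l ≥ 1`) of the transpose (conjugate) partition. -/
noncomputable def PartitionSeq.transp (P : PartitionSeq) (l : ℕ) : ℕ :=
  Nat.card {j : ℕ | l ≤ P.parts j}

/-- The size `|λ| = Σᵢ λᵢ` of a partition. -/
noncomputable def PartitionSeq.size (P : PartitionSeq) : ℕ := ∑ᶠ i, P.parts i

/-- The set `X_λ = {λᵀₗ - l + 1 - δ/2 : l ≥ 1} ⊆ δ/2 + ℤ` (realized inside `ℚ`). -/
def Xset (δ : ℤ) (P : PartitionSeq) : Set ℚ :=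
  {q | ∃ l : ℕ, 1 ≤ l ∧ q = (P.transp l : ℚ) - l + 1 - (δ : ℚ) / 2}

-- set description
lemma transp_set_eq (P : PartitionSeq) (N : ℕ) (hN : ∀ i, N ≤ i → P.parts i = 0)
    (l : ℕ) (hl : 1 ≤ l) :
    {j : ℕ | l ≤ P.parts j} = ↑((Finset.range N).filter (fun j => l ≤ P.parts j)) := by
  ext j
  simp only [Set.mem_setOf_eq, Finset.coe_filter, Finset.mem_range, Set.mem_setOf_eq]
  constructor
  · intro h
    refine ⟨?_, h⟩
    by_contra hj
    push_neg at hj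
    have := hN j hj
    omega
  · exact fun h => h.2

lemma transp_eq (P : PartitionSeq) (N : ℕ) (hN : ∀ i, N ≤ i → P.parts i = 0)
    (l : ℕ) (hl : 1 ≤ l) :
    P.transp l = ((Finset.range N).filter (fun j => l ≤ P.parts j)).card := by
  rw [PartitionSeq.transp, transp_set_eq P N hN l hl, Nat.card_coe_set_eq,
    Set.ncard_coe_finset]

lemma transp_zero (P : PartitionSeq) (l : ℕ) (hl : P.parts 0 < l) :
    P.transp l = 0 := by
  have : {j : ℕ | l ≤ P.parts j} = ∅ := by
    ext j
    simp only [Set.mem_setOf_eq, Set.mem_empty_iff_false, iff_false, not_le]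
    exact lt_of_le_of_lt (P.antitone (Nat.zero_le j)) hl
  rw [PartitionSeq.transp, this]
  simp

lemma transp_antitone (P : PartitionSeq) {l l' : ℕ} (hl : 1 ≤ l) (h : l ≤ l') :
    P.transp l' ≤ P.transp l := by
  obtain ⟨N, hN⟩ := P.eventually_zero
  rw [transp_eq P N hN l hl, transp_eq P N hN l' (le_trans hl h)]
  apply Finset.card_le_card
  intro j hj
  simp only [Finset.mem_filter] at *
  exact ⟨hj.1, le_trans h hj.2⟩

lemma size_eq_sum (P : PartitionSeq) (N : ℕ) (hN : ∀ i, N ≤ i → P.parts i = 0) :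
    P.size = ∑ j ∈ Finset.range N, P.parts j := by
  rw [PartitionSeq.size]
  apply finsum_eq_sum_of_support_subset  -- guess name
  intro j hj
  simp only [Function.mem_support] at hj
  simp only [Finset.coe_range, Set.mem_Iio]
  by_contra h
  push_neg at h
  exact hj (hN j h)

lemma size_eq_sum_transp (P : PartitionSeq) (K : ℕ) (hK : P.parts 0 ≤ K) :
    P.size = ∑ l ∈ Finset.Icc 1 K, P.transp l := by
  obtain ⟨N, hN⟩ := P.eventually_zero
  rw [size_eq_sum P N hN]
  have h1 : ∀ j, P.parts j = ∑ l ∈ Finset.Icc 1 K, if l ≤ P.parts j then 1 else 0 := by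
    intro j
    have hle : P.parts j ≤ K := le_trans (P.antitone (Nat.zero_le j)) hK
    rw [← Finset.sum_filter]
    have : (Finset.Icc 1 K).filter (fun l => l ≤ P.parts j) = Finset.Icc 1 (P.parts j) := by
      ext l
      simp only [Finset.mem_filter, Finset.mem_Icc]
      omega
    rw [this]
    simp [Nat.card_Icc]
  have h2 : ∀ l ∈ Finset.Icc 1 K, P.transp l
      = ∑ j ∈ Finset.range N, if l ≤ P.parts j then 1 else 0 := by
    intro l hl
    rw [Finset.mem_Icc] at hl
    rw [transp_eq P N hN l hl.1, Finset.card_filter]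
  rw [Finset.sum_congr rfl h2, Finset.sum_comm]
  exact Finset.sum_congr rfl (fun j _ => h1 j)

noncomputable def gval (δ : ℤ) (P : PartitionSeq) (l : ℕ) : ℚ :=
  (P.transp l : ℚ) - l + 1 - (δ : ℚ) / 2

def Tset (δ : ℤ) (N : ℕ) : Set ℚ :=
  {q | ∃ l : ℕ, N < l ∧ q = 1 - (l : ℚ) - (δ : ℚ) / 2}

lemma gval_strictAnti (δ : ℤ) (P : PartitionSeq) {l l' : ℕ} (hl : 1 ≤ l) (h : l < l') :
    gval δ P l' < gval δ P l := by
  have h1 : P.transp l' ≤ P.transp l := transp_antitone P hl (le_of_lt h)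
  have h2 : (P.transp l' : ℚ) ≤ (P.transp l : ℚ) := by exact_mod_cast h1
  have h3 : (l : ℚ) < (l' : ℚ) := by exact_mod_cast h
  unfold gval
  linarith

lemma gval_injOn (δ : ℤ) (P : PartitionSeq) (N : ℕ) :
    Set.InjOn (gval δ P) ↑(Finset.Icc 1 N) := by
  intro a ha b hb heq
  simp only [Finset.coe_Icc, Set.mem_Icc] at ha hb
  rcases lt_trichotomy a b with h | h | h
  · exact absurd heq (ne_of_gt (gval_strictAnti δ P ha.1 h))
  · exact h
  · exact absurd heq (ne_of_lt (gval_strictAnti δ P hb.1 h))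

lemma mem_image_gval (δ : ℤ) (P : PartitionSeq) (N : ℕ) (hN : P.parts 0 ≤ N) (a : ℚ) :
    a ∈ (Finset.Icc 1 N).image (gval δ P) ↔ a ∈ Xset δ P ∧ a ∉ Tset δ N := by
  constructor
  · rintro h
    rw [Finset.mem_image] at h
    obtain ⟨l, hl, rfl⟩ := h
    rw [Finset.mem_Icc] at hl
    refine ⟨⟨l, hl.1, rfl⟩, ?_⟩
    rintro ⟨l', hl', heq⟩
    have h1 : (0 : ℚ) ≤ (P.transp l : ℚ) := Nat.cast_nonneg _
    have h2 : (l : ℚ) ≤ (N : ℚ) := by exact_mod_cast hl.2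
    have h3 : (N : ℚ) < (l' : ℚ) := by exact_mod_cast hl'
    unfold gval at heq
    linarith
  · rintro ⟨⟨l, hl, rfl⟩, hT⟩
    rw [Finset.mem_image]
    refine ⟨l, ?_, rfl⟩
    rw [Finset.mem_Icc]
    refine ⟨hl, ?_⟩
    by_contra hlN
    push_neg at hlN
    exact hT ⟨l, hlN, by rw [transp_zero P l (lt_of_le_of_lt hN hlN)]; push_cast; ring⟩

lemma Tset_subset (δ : ℤ) (P : PartitionSeq) (N : ℕ) (hN : P.parts 0 ≤ N) :
    Tset δ N ⊆ Xset δ P := by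
  rintro q ⟨l, hl, rfl⟩
  exact ⟨l, by omega, by rw [transp_zero P l (lt_of_le_of_lt hN hl)]; push_cast; ring⟩

/-- Reversing the orientation at a vertex: if `μ` is the partition with
`X_μ = (X_λ \ {x_M}) ∪ {-x_M}` where `x_M = λᵀ_M - M + 1 - δ/2` and
`-x_M ∉ X_λ`, then `|μ| = |λ| - 2 x_M` if `x_M > 0`, and `|μ| = |λ| + 2|x_M|`
if `x_M < 0`. -/
theorem rev_size (δ : ℤ) (P Q : PartitionSeq) (M : ℕ) (hM : 1 ≤ M) (x : ℚ)
    (hx : x = (P.transp M : ℚ) - M + 1 - (δ : ℚ) / 2)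
    (hnot : -x ∉ Xset δ P)
    (hQ : Xset δ Q = (Xset δ P \ {x}) ∪ {-x}) :
    (0 < x → (Q.size : ℚ) = (P.size : ℚ) - 2 * x) ∧
    (x < 0 → (Q.size : ℚ) = (P.size : ℚ) + 2 * |x|) := by
  set N := max M (max (P.parts 0) (Q.parts 0)) with hNdef
  have hNP : P.parts 0 ≤ N := le_max_of_le_right (le_max_left _ _)
  have hNQ : Q.parts 0 ≤ N := le_max_of_le_right (le_max_right _ _)
  have hMN : M ≤ N := le_max_left _ _
  set FP := (Finset.Icc 1 N).image (gval δ P) with hFP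
  set FQ := (Finset.Icc 1 N).image (gval δ Q) with hFQ
  have hxX : x ∈ Xset δ P := ⟨M, hM, hx⟩
  have hxFP : x ∈ FP := by
    rw [hFP, Finset.mem_image]
    exact ⟨M, Finset.mem_Icc.mpr ⟨hM, hMN⟩, hx.symm⟩
  have hxT : x ∉ Tset δ N := ((mem_image_gval δ P N hNP x).mp hxFP).2
  have hnxT : -x ∉ Tset δ N := fun h => hnot (Tset_subset δ P N hNP h)
  -- finset equality
  have hFQP : FQ = insert (-x) (FP.erase x) := by
    apply Finset.coe_injective
    rw [Finset.coe_insert, Finset.coe_erase]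
    ext a
    rw [Finset.mem_coe, mem_image_gval δ Q N hNQ, hQ]
    have hmem : a ∈ (↑FP : Set ℚ) ↔ a ∈ Xset δ P ∧ a ∉ Tset δ N := by
      rw [Finset.mem_coe, mem_image_gval δ P N hNP]
    simp only [Set.mem_union, Set.mem_diff, Set.mem_singleton_iff, Set.mem_insert_iff,
      Set.mem_diff, hmem]
    constructor
    · rintro ⟨h1 | h1, h2⟩
      · exact Or.inr ⟨⟨h1.1, h2⟩, h1.2⟩
      · exact Or.inl h1
    · rintro (rfl | ⟨⟨h1, h2⟩, h3⟩)
      · exact ⟨Or.inr rfl, hnxT⟩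
      · exact ⟨Or.inl ⟨h1, h3⟩, h2⟩
  have hnxFP : -x ∉ FP.erase x := by
    intro h
    have := Finset.mem_of_mem_erase h
    exact hnot ((mem_image_gval δ P N hNP (-x)).mp this).1
  -- sums
  have hsum : ∑ a ∈ FQ, a = (∑ a ∈ FP, a) - 2 * x := by
    rw [hFQP, Finset.sum_insert hnxFP, Finset.sum_erase_eq_sub hxFP]
    ring
  have hsumP : ∑ a ∈ FP, a = ∑ l ∈ Finset.Icc 1 N, gval δ P l :=
    Finset.sum_image (fun a ha b hb h => gval_injOn δ P N ha hb h)
  have hsumQ : ∑ a ∈ FQ, a = ∑ l ∈ Finset.Icc 1 N, gval δ Q l :=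
    Finset.sum_image (fun a ha b hb h => gval_injOn δ Q N ha hb h)
  have hgsplit : ∀ R : PartitionSeq, ∑ l ∈ Finset.Icc 1 N, gval δ R l
      = (∑ l ∈ Finset.Icc 1 N, (R.transp l : ℚ))
        + ∑ l ∈ Finset.Icc 1 N, (1 - (l : ℚ) - (δ : ℚ) / 2) := by
    intro R
    rw [← Finset.sum_add_distrib]
    exact Finset.sum_congr rfl (fun l _ => by unfold gval; ring)
  have hsizeP : (P.size : ℚ) = ∑ l ∈ Finset.Icc 1 N, (P.transp l : ℚ) := by
    rw [size_eq_sum_transp P N hNP]; push_cast; rfl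
  have hsizeQ : (Q.size : ℚ) = ∑ l ∈ Finset.Icc 1 N, (Q.transp l : ℚ) := by
    rw [size_eq_sum_transp Q N hNQ]; push_cast; rfl
  have key : (Q.size : ℚ) = (P.size : ℚ) - 2 * x := by
    rw [hsizeP, hsizeQ]
    have := hsum
    rw [hsumP, hsumQ, hgsplit P, hgsplit Q] at this
    linarith
  refine ⟨fun _ => key, fun hneg => ?_⟩
  rw [key, abs_of_neg hneg]
  ring
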